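/- Let T = (V,E) be a finite tree, β ≥ 0, and B : V → ℝ with B_v ≥ 0 for all v, and let ν be the Ising measure on T with parameters β, B. Then for all vertices v, w ∈ V, 0 ≤ ⟨x_v·x_w⟩_ν − ⟨x_v⟩_ν⟨x_w⟩_ν ≤ (tanh β)^{d(v,w)}, where d(v,w) is the graph distance in T. -/

import Mathlib

open Real Finset

attribute [local instance] Classical.propDecidable

/-- spin value of a Boolean: `true ↦ +1`, `false ↦ -1`. -/
def spin (b : Bool) : ℝ := if b then 1 else -1

/-- the product `x_i x_j` of the spins at the two endpoints of an edge. -/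
def edgeTerm {V : Type} (x : V → Bool) : Sym2 V → ℝ :=
  Sym2.lift ⟨fun i j => spin (x i) * spin (x j), fun i j => by ring⟩

set_option linter.unusedSectionVars false

section AuxScalar

lemma spin_mul_self (b : Bool) : spin b * spin b = 1 := by cases b <;> simp [spin]

lemma abs_spin (b : Bool) : |spin b| = 1 := by cases b <;> simp [spin]

lemma spin_not (b : Bool) : spin (!b) = -spin b := by cases b <;> simp [spin]

noncomputable def dlt (β Bu : ℝ) : ℝ := Real.log (Real.sqrt (cosh (β + Bu) / cosh (Bu - β)))
noncomputable def cc (β Bu : ℝ) : ℝ := 2 * Real.sqrt (cosh (β + Bu) * cosh (Bu - β))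
noncomputable def aa (β Bu : ℝ) : ℝ := (tanh (β + Bu) + tanh (Bu - β)) / 2
noncomputable def bb (β Bu : ℝ) : ℝ := (tanh (β + Bu) - tanh (Bu - β)) / 2

lemma spin_true : spin true = 1 := rfl
lemma spin_false : spin false = -1 := rfl

lemma cc_pos (β Bu : ℝ) : 0 < cc β Bu := by
  have h1 := Real.cosh_pos (β + Bu)
  have h2 := Real.cosh_pos (Bu - β)
  have : (0:ℝ) < Real.sqrt (cosh (β + Bu) * cosh (Bu - β)) :=
    Real.sqrt_pos.mpr (by positivity)
  unfold cc; linarith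

lemma exp_dlt (β Bu : ℝ) : Real.exp (dlt β Bu) = Real.sqrt (cosh (β + Bu) / cosh (Bu - β)) := by
  apply Real.exp_log
  exact Real.sqrt_pos.mpr (div_pos (Real.cosh_pos _) (Real.cosh_pos _))

lemma cc_mul_exp_dlt (β Bu : ℝ) : cc β Bu * Real.exp (dlt β Bu) = 2 * cosh (β + Bu) := by
  rw [exp_dlt, cc, mul_assoc, ← Real.sqrt_mul (by positivity)]
  have h2 : Real.cosh (Bu - β) ≠ 0 := (Real.cosh_pos _).ne'
  rw [show Real.cosh (β + Bu) * Real.cosh (Bu - β) * (Real.cosh (β + Bu) / Real.cosh (Bu - β))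
      = Real.cosh (β + Bu) * Real.cosh (β + Bu) by field_simp]
  rw [Real.sqrt_mul_self (Real.cosh_pos _).le]

lemma cc_mul_exp_neg_dlt (β Bu : ℝ) : cc β Bu * Real.exp (-dlt β Bu) = 2 * cosh (Bu - β) := by
  rw [Real.exp_neg, exp_dlt, ← Real.sqrt_inv, inv_div, cc, mul_assoc,
    ← Real.sqrt_mul (by positivity)]
  have h1 : Real.cosh (β + Bu) ≠ 0 := (Real.cosh_pos _).ne'
  rw [show Real.cosh (β + Bu) * Real.cosh (Bu - β) * (Real.cosh (Bu - β) / Real.cosh (β + Bu))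
      = Real.cosh (Bu - β) * Real.cosh (Bu - β) by field_simp]
  rw [Real.sqrt_mul_self (Real.cosh_pos _).le]

lemma key_cosh (β Bu : ℝ) (b : Bool) :
    2 * Real.cosh (β * spin b + Bu) = cc β Bu * Real.exp (dlt β Bu * spin b) := by
  cases b
  · rw [spin_false, show β * (-1:ℝ) + Bu = Bu - β by ring,
      show dlt β Bu * (-1:ℝ) = -dlt β Bu by ring, cc_mul_exp_neg_dlt]
  · rw [spin_true, show β * (1:ℝ) + Bu = β + Bu by ring, mul_one, cc_mul_exp_dlt]

lemma key_sinh (β Bu : ℝ) (b : Bool) :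
    2 * Real.sinh (β * spin b + Bu)
      = (aa β Bu + bb β Bu * spin b) * (cc β Bu * Real.exp (dlt β Bu * spin b)) := by
  have hc1 := Real.cosh_pos (β + Bu)
  have hc2 := Real.cosh_pos (Bu - β)
  cases b
  · rw [spin_false, show β * (-1:ℝ) + Bu = Bu - β by ring,
      show dlt β Bu * (-1:ℝ) = -dlt β Bu by ring, cc_mul_exp_neg_dlt]
    have h : aa β Bu + bb β Bu * (-1) = Real.tanh (Bu - β) := by unfold aa bb; ring
    rw [h, Real.tanh_eq_sinh_div_cosh]
    field_simp
  · rw [spin_true, show β * (1:ℝ) + Bu = β + Bu by ring, mul_one, mul_one, cc_mul_exp_dlt]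
    have h : aa β Bu + bb β Bu = Real.tanh (β + Bu) := by unfold aa bb; ring
    rw [h, Real.tanh_eq_sinh_div_cosh]
    field_simp

lemma dlt_nonneg {β Bu : ℝ} (hβ : 0 ≤ β) (hBu : 0 ≤ Bu) : 0 ≤ dlt β Bu := by
  apply Real.log_nonneg
  rw [show (1:ℝ) = Real.sqrt 1 by simp]
  apply Real.sqrt_le_sqrt
  rw [le_div_iff₀ (Real.cosh_pos _), one_mul]
  rw [Real.cosh_add, Real.cosh_sub]
  have h1 : 0 ≤ Real.sinh β := Real.sinh_nonneg_iff.mpr hβ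
  have h2 : 0 ≤ Real.sinh Bu := Real.sinh_nonneg_iff.mpr hBu
  nlinarith

lemma bb_eq (β Bu : ℝ) :
    bb β Bu = Real.sinh (2 * β) / (2 * (Real.cosh (β + Bu) * Real.cosh (Bu - β))) := by
  have hc1 := Real.cosh_pos (β + Bu)
  have hc2 := Real.cosh_pos (Bu - β)
  have hs : Real.sinh (2 * β)
      = Real.sinh (β + Bu) * Real.cosh (Bu - β) - Real.cosh (β + Bu) * Real.sinh (Bu - β) := by
    rw [← Real.sinh_sub]; ring_nf
  unfold bb
  rw [div_eq_div_iff (by norm_num) (by positivity), Real.tanh_eq_sinh_div_cosh,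
    Real.tanh_eq_sinh_div_cosh, hs]
  field_simp

lemma bb_nonneg {β Bu : ℝ} (hβ : 0 ≤ β) : 0 ≤ bb β Bu := by
  rw [bb_eq]
  have hc1 := Real.cosh_pos (x := β + Bu)
  have hc2 := Real.cosh_pos (x := Bu - β)
  have h1 : 0 ≤ Real.sinh (2 * β) := Real.sinh_nonneg_iff.mpr (by linarith)
  positivity

lemma bb_le_tanh {β Bu : ℝ} (hβ : 0 ≤ β) : bb β Bu ≤ Real.tanh β := by
  rw [bb_eq, Real.tanh_eq_sinh_div_cosh]
  have hc1 := Real.cosh_pos (β + Bu)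
  have hc2 := Real.cosh_pos (Bu - β)
  have hcβ := Real.cosh_pos β
  rw [div_le_div_iff₀ (by positivity) hcβ]
  rw [Real.sinh_two_mul, Real.cosh_add, Real.cosh_sub]
  have hq1 : Real.cosh β ^ 2 - Real.sinh β ^ 2 = 1 := Real.cosh_sq_sub_sinh_sq β
  have hq2 : Real.cosh Bu ^ 2 - Real.sinh Bu ^ 2 = 1 := Real.cosh_sq_sub_sinh_sq Bu
  have h1 : 0 ≤ Real.sinh β := Real.sinh_nonneg_iff.mpr hβ
  have key : Real.sinh β * (2 * ((Real.cosh β * Real.cosh Bu + Real.sinh β * Real.sinh Bu) *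
        (Real.cosh Bu * Real.cosh β - Real.sinh Bu * Real.sinh β)))
      - 2 * Real.sinh β * Real.cosh β * Real.cosh β = 2 * Real.sinh β * Real.sinh Bu ^ 2 := by
    linear_combination (2 * Real.sinh β * Real.sinh Bu ^ 2) * hq1
      + (2 * Real.sinh β * Real.cosh β ^ 2) * hq2
  nlinarith [mul_nonneg h1 (sq_nonneg (Real.sinh Bu))]

lemma tanh_nonneg {β : ℝ} (hβ : 0 ≤ β) : 0 ≤ Real.tanh β := by
  rw [Real.tanh_eq_sinh_div_cosh]
  exact div_nonneg (Real.sinh_nonneg_iff.mpr hβ) (Real.cosh_pos _).le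

lemma tanh_le_one (β : ℝ) : Real.tanh β ≤ 1 := by
  rw [Real.tanh_eq_sinh_div_cosh]
  exact ((div_lt_one (Real.cosh_pos β)).mpr (Real.sinh_lt_cosh β)).le

end AuxScalar

variable {V : Type} [Fintype V]


noncomputable def hamE (es : Finset (Sym2 V)) (β : ℝ) (B : V → ℝ) (x : V → Bool) : ℝ :=
  β * ∑ e ∈ es, edgeTerm x e + ∑ v, B v * spin (x v)

noncomputable def EE (es : Finset (Sym2 V)) (β : ℝ) (B : V → ℝ) (f : (V → Bool) → ℝ) : ℝ :=
  (∑ x : V → Bool, f x * Real.exp (hamE es β B x)) /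
    (∑ x : V → Bool, Real.exp (hamE es β B x))

noncomputable def flipAt (u : V) (x : V → Bool) : V → Bool := Function.update x u (!(x u))

lemma flipAt_self (u : V) (x : V → Bool) : flipAt u x u = !(x u) := Function.update_self _ _ _
lemma flipAt_ne (u : V) (x : V → Bool) {i : V} (h : i ≠ u) : flipAt u x i = x i :=
  Function.update_of_ne h _ _

lemma flipAt_involutive (u : V) : Function.Involutive (flipAt u) := by
  intro x; funext i
  rcases eq_or_ne i u with rfl | h
  · rw [flipAt_self, flipAt_self, Bool.not_not]
  · rw [flipAt_ne u _ h, flipAt_ne u _ h]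

lemma exp_pm (t : ℝ) (b : Bool) :
    Real.exp (spin b * t) + Real.exp (-spin b * t) = 2 * Real.cosh t := by
  cases b
  · rw [spin_false, Real.cosh_eq, show (-1:ℝ) * t = -t by ring,
      show -(-1:ℝ) * t = t by ring]
    ring
  · rw [spin_true, Real.cosh_eq, show -(1:ℝ) * t = -t by ring, one_mul]
    ring

lemma exp_pm' (t : ℝ) (b : Bool) :
    Real.exp (t * spin b) + Real.exp (t * -spin b) = 2 * Real.cosh t := by
  cases b
  · rw [spin_false, Real.cosh_eq, show t * (-1:ℝ) = -t by ring,
      show t * -(-1:ℝ) = t by ring]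
    ring
  · rw [spin_true, Real.cosh_eq, show t * -(1:ℝ) = -t by ring, mul_one]
    ring

lemma exp_pm_sinh (t : ℝ) (b : Bool) :
    spin b * Real.exp (spin b * t) + -spin b * Real.exp (-spin b * t)
      = 2 * Real.sinh t := by
  cases b
  · rw [spin_false, Real.sinh_eq, show (-1:ℝ) * t = -t by ring,
      show -(-1:ℝ) * t = t by ring]
    ring
  · rw [spin_true, Real.sinh_eq, show -(1:ℝ) * t = -t by ring, one_mul]
    ring

lemma sum_pair (u : V) (F G : (V → Bool) → ℝ) (h : ∀ x, F x + F (flipAt u x) = G x) :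
    ∑ x : V → Bool, F x = 1 / 2 * ∑ x : V → Bool, G x := by
  have hs : ∑ x : V → Bool, F (flipAt u x) = ∑ x : V → Bool, F x :=
    Fintype.sum_bijective (flipAt u) (flipAt_involutive u).bijective _ F fun _ => rfl
  have h2 : ∑ x : V → Bool, F x + ∑ x : V → Bool, F (flipAt u x) = ∑ x : V → Bool, G x := by
    rw [← Finset.sum_add_distrib]
    exact Finset.sum_congr rfl fun x _ => h x
  rw [hs] at h2
  linarith

noncomputable def Aham (es : Finset (Sym2 V)) (β : ℝ) (B : V → ℝ) (u pv : V)
    (x : V → Bool) : ℝ :=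
  β * ∑ e ∈ es.erase s(u, pv), edgeTerm x e + ∑ i ∈ Finset.univ.erase u, B i * spin (x i)

lemma edgeTerm_mk (x : V → Bool) (i j : V) : edgeTerm x s(i, j) = spin (x i) * spin (x j) := rfl

lemma edgeTerm_update {u : V} (x : V → Bool) (b : Bool) (e : Sym2 V) (he : u ∉ e) :
    edgeTerm (Function.update x u b) e = edgeTerm x e := by
  induction e using Sym2.ind with
  | _ i j =>
    rw [Sym2.mem_iff] at he
    push_neg at he
    rw [edgeTerm_mk, edgeTerm_mk,
      Function.update_of_ne (fun h => he.1 h.symm),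
      Function.update_of_ne (fun h => he.2 h.symm)]

lemma hamE_decomp (es : Finset (Sym2 V)) (β : ℝ) (B : V → ℝ) {u pv : V}
    (hmem : s(u, pv) ∈ es) (x : V → Bool) :
    hamE es β B x = Aham es β B u pv x + spin (x u) * (β * spin (x pv) + B u) := by
  unfold hamE Aham
  rw [← Finset.add_sum_erase es (edgeTerm x) hmem,
    ← Finset.add_sum_erase Finset.univ (fun i => B i * spin (x i)) (Finset.mem_univ u),
    edgeTerm_mk]
  ring

lemma Aham_update (es : Finset (Sym2 V)) (β : ℝ) (B : V → ℝ) {u pv : V}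
    (huniq : ∀ e ∈ es, u ∈ e → e = s(u, pv)) (x : V → Bool) (b : Bool) :
    Aham es β B u pv (Function.update x u b) = Aham es β B u pv x := by
  unfold Aham
  congr 1
  · congr 1
    refine Finset.sum_congr rfl fun e he => ?_
    rw [Finset.mem_erase] at he
    exact edgeTerm_update x b e fun hc => he.1 (huniq e he.2 hc)
  · refine Finset.sum_congr rfl fun i hi => ?_
    rw [Function.update_of_ne (Finset.mem_erase.1 hi).1]

lemma hamE_erase_decomp (es : Finset (Sym2 V)) (β : ℝ) (B : V → ℝ) {u pv : V}
    (x : V → Bool) :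
    hamE (es.erase s(u, pv)) β (Function.update B pv (B pv + dlt β (B u))) x
      = Aham es β B u pv x + dlt β (B u) * spin (x pv) + B u * spin (x u) := by
  unfold hamE Aham
  have hfield : ∀ i, Function.update B pv (B pv + dlt β (B u)) i * spin (x i)
      = B i * spin (x i) + (if i = pv then dlt β (B u) * spin (x pv) else 0) := by
    intro i
    rcases eq_or_ne i pv with rfl | h
    · rw [Function.update_self, if_pos rfl]; ring
    · rw [Function.update_of_ne h, if_neg h]; ring
  rw [Finset.sum_congr rfl fun i _ => hfield i, Finset.sum_add_distrib,
    Finset.sum_ite_eq' Finset.univ pv (fun _ => dlt β (B u) * spin (x pv)),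
    if_pos (Finset.mem_univ pv),
    ← Finset.add_sum_erase Finset.univ (fun i => B i * spin (x i)) (Finset.mem_univ u)]
  ring

section Marg

variable (es : Finset (Sym2 V)) (β : ℝ) (B : V → ℝ) {u pv : V}

lemma sum_exp_ham (hup : u ≠ pv) (hmem : s(u, pv) ∈ es)
    (huniq : ∀ e ∈ es, u ∈ e → e = s(u, pv))
    (f : (V → Bool) → ℝ) (hf : ∀ x b, f (Function.update x u b) = f x) :
    ∑ x : V → Bool, f x * Real.exp (hamE es β B x)
      = cc β (B u) / 2 *
        ∑ x : V → Bool, f x * Real.exp (Aham es β B u pv x + dlt β (B u) * spin (x pv)) := by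
  have key : ∀ x : V → Bool,
      f x * Real.exp (hamE es β B x) + f (flipAt u x) * Real.exp (hamE es β B (flipAt u x))
        = cc β (B u) *
            (f x * Real.exp (Aham es β B u pv x + dlt β (B u) * spin (x pv))) := by
    intro x
    have hf' : f (flipAt u x) = f x := hf x (!(x u))
    have hA : Aham es β B u pv (flipAt u x) = Aham es β B u pv x :=
      Aham_update es β B huniq x (!(x u))
    have hp' : spin (flipAt u x pv) = spin (x pv) := by rw [flipAt_ne u x (Ne.symm hup)]
    have hu' : spin (flipAt u x u) = -spin (x u) := by rw [flipAt_self]; exact spin_not _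
    rw [hamE_decomp es β B hmem x, hamE_decomp es β B hmem (flipAt u x), hf', hA, hp', hu']
    have hcosh := exp_pm (β * spin (x pv) + B u) (x u)
    have hkey := key_cosh β (B u) (x pv)
    simp only [Real.exp_add]
    linear_combination (f x * Real.exp (Aham es β B u pv x)) * hcosh
      + (f x * Real.exp (Aham es β B u pv x)) * hkey
  have h := sum_pair u _ _ key
  rw [h, ← Finset.mul_sum]
  ring

lemma sum_exp_ham_spin (hup : u ≠ pv) (hmem : s(u, pv) ∈ es)
    (huniq : ∀ e ∈ es, u ∈ e → e = s(u, pv))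
    (f : (V → Bool) → ℝ) (hf : ∀ x b, f (Function.update x u b) = f x) :
    ∑ x : V → Bool, (f x * spin (x u)) * Real.exp (hamE es β B x)
      = cc β (B u) / 2 *
        ∑ x : V → Bool, (f x * (aa β (B u) + bb β (B u) * spin (x pv)))
          * Real.exp (Aham es β B u pv x + dlt β (B u) * spin (x pv)) := by
  have key : ∀ x : V → Bool,
      (f x * spin (x u)) * Real.exp (hamE es β B x)
        + (f (flipAt u x) * spin (flipAt u x u)) * Real.exp (hamE es β B (flipAt u x))
        = cc β (B u) * ((f x * (aa β (B u) + bb β (B u) * spin (x pv)))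
            * Real.exp (Aham es β B u pv x + dlt β (B u) * spin (x pv))) := by
    intro x
    have hf' : f (flipAt u x) = f x := hf x (!(x u))
    have hA : Aham es β B u pv (flipAt u x) = Aham es β B u pv x :=
      Aham_update es β B huniq x (!(x u))
    have hp' : spin (flipAt u x pv) = spin (x pv) := by rw [flipAt_ne u x (Ne.symm hup)]
    have hu' : spin (flipAt u x u) = -spin (x u) := by rw [flipAt_self]; exact spin_not _
    rw [hamE_decomp es β B hmem x, hamE_decomp es β B hmem (flipAt u x), hf', hA, hp', hu']
    have hsinh := exp_pm_sinh (β * spin (x pv) + B u) (x u)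
    have hkey := key_sinh β (B u) (x pv)
    simp only [Real.exp_add]
    linear_combination (f x * Real.exp (Aham es β B u pv x)) * hsinh
      + (f x * Real.exp (Aham es β B u pv x)) * hkey
  have h := sum_pair u _ _ key
  rw [h, ← Finset.mul_sum]
  ring

lemma sum_exp_ham_erase (hup : u ≠ pv)
    (huniq : ∀ e ∈ es, u ∈ e → e = s(u, pv))
    (f : (V → Bool) → ℝ) (hf : ∀ x b, f (Function.update x u b) = f x) :
    ∑ x : V → Bool, f x *
        Real.exp (hamE (es.erase s(u, pv)) β (Function.update B pv (B pv + dlt β (B u))) x)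
      = Real.cosh (B u) *
        ∑ x : V → Bool, f x * Real.exp (Aham es β B u pv x + dlt β (B u) * spin (x pv)) := by
  have key : ∀ x : V → Bool,
      f x * Real.exp (hamE (es.erase s(u, pv)) β (Function.update B pv (B pv + dlt β (B u))) x)
        + f (flipAt u x) *
            Real.exp (hamE (es.erase s(u, pv)) β (Function.update B pv (B pv + dlt β (B u)))
              (flipAt u x))
        = 2 * Real.cosh (B u) *
            (f x * Real.exp (Aham es β B u pv x + dlt β (B u) * spin (x pv))) := by
    intro x
    have hf' : f (flipAt u x) = f x := hf x (!(x u))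
    have hA : Aham es β B u pv (flipAt u x) = Aham es β B u pv x :=
      Aham_update es β B huniq x (!(x u))
    have hp' : spin (flipAt u x pv) = spin (x pv) := by rw [flipAt_ne u x (Ne.symm hup)]
    have hu' : spin (flipAt u x u) = -spin (x u) := by rw [flipAt_self]; exact spin_not _
    rw [hamE_erase_decomp es β B x, hamE_erase_decomp es β B (flipAt u x), hf', hA, hp', hu']
    have hcosh := exp_pm' (B u) (x u)
    simp only [Real.exp_add]
    linear_combination
      (f x * (Real.exp (Aham es β B u pv x) * Real.exp (dlt β (B u) * spin (x pv)))) * hcosh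
  have h := sum_pair u _ _ key
  rw [h, ← Finset.mul_sum]
  ring

end Marg

section EElemmas

variable (es : Finset (Sym2 V)) (β : ℝ) (B : V → ℝ)

lemma sum_exp_ham_pos : 0 < ∑ x : V → Bool, Real.exp (hamE es β B x) :=
  Finset.sum_pos (fun _ _ => Real.exp_pos _) Finset.univ_nonempty

lemma EE_one : EE es β B (fun _ => 1) = 1 := by
  unfold EE
  simp only [one_mul]
  exact div_self (sum_exp_ham_pos es β B).ne'

lemma abs_EE_spin_le_one (v : V) : |EE es β B fun x => spin (x v)| ≤ 1 := by
  unfold EE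
  rw [abs_div, abs_of_pos (sum_exp_ham_pos es β B), div_le_one (sum_exp_ham_pos es β B)]
  calc |∑ x : V → Bool, spin (x v) * Real.exp (hamE es β B x)|
      ≤ ∑ x : V → Bool, |spin (x v) * Real.exp (hamE es β B x)| :=
        Finset.abs_sum_le_sum_abs _ _
    _ = ∑ x : V → Bool, Real.exp (hamE es β B x) := by
        refine Finset.sum_congr rfl fun x _ => ?_
        rw [abs_mul, abs_spin, one_mul, abs_of_pos (Real.exp_pos _)]

lemma EE_spin_sq (v : V) : EE es β B (fun x => spin (x v) * spin (x v)) = 1 := by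
  have h : (fun x : V → Bool => spin (x v) * spin (x v)) = fun _ => (1:ℝ) :=
    funext fun x => spin_mul_self _
  rw [h, EE_one]

variable {u pv : V}

lemma EE_marg (hup : u ≠ pv) (hmem : s(u, pv) ∈ es)
    (huniq : ∀ e ∈ es, u ∈ e → e = s(u, pv))
    (f : (V → Bool) → ℝ) (hf : ∀ x b, f (Function.update x u b) = f x) :
    EE es β B f
      = EE (es.erase s(u, pv)) β (Function.update B pv (B pv + dlt β (B u))) f := by
  have h1 := sum_exp_ham es β B hup hmem huniq f hf
  have h2 := sum_exp_ham es β B hup hmem huniq (fun _ => 1) fun _ _ => rfl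
  have h3 := sum_exp_ham_erase es β B hup huniq f hf
  have h4 := sum_exp_ham_erase es β B hup huniq (fun _ => 1) fun _ _ => rfl
  simp only [one_mul] at h2 h4
  unfold EE
  rw [h1, h2, h3, h4,
    mul_div_mul_left _ _ (ne_of_gt (div_pos (cc_pos β (B u)) two_pos)),
    mul_div_mul_left _ _ (Real.cosh_pos (B u)).ne']

lemma EE_marg_spin (hup : u ≠ pv) (hmem : s(u, pv) ∈ es)
    (huniq : ∀ e ∈ es, u ∈ e → e = s(u, pv))
    (f : (V → Bool) → ℝ) (hf : ∀ x b, f (Function.update x u b) = f x) :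
    EE es β B (fun x => f x * spin (x u))
      = aa β (B u) *
          EE (es.erase s(u, pv)) β (Function.update B pv (B pv + dlt β (B u))) f
        + bb β (B u) *
          EE (es.erase s(u, pv)) β (Function.update B pv (B pv + dlt β (B u)))
            (fun x => f x * spin (x pv)) := by
  have hfp : ∀ (x : V → Bool) (b : Bool),
      (fun x => f x * spin (x pv)) (Function.update x u b)
        = (fun x => f x * spin (x pv)) x := by
    intro x b
    show f (Function.update x u b) * spin (Function.update x u b pv) = f x * spin (x pv)
    rw [hf x b, Function.update_of_ne (Ne.symm hup)]
  have h1 := sum_exp_ham_spin es β B hup hmem huniq f hf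
  have h2 := sum_exp_ham es β B hup hmem huniq (fun _ => 1) fun _ _ => rfl
  have h3 := sum_exp_ham_erase es β B hup huniq f hf
  have h4 := sum_exp_ham_erase es β B hup huniq (fun _ => 1) fun _ _ => rfl
  have h5 := sum_exp_ham_erase es β B hup huniq (fun x => f x * spin (x pv)) hfp
  simp only [one_mul] at h2 h4
  unfold EE
  rw [h1, h2, h3, h4, h5]
  have hsplit : ∑ x : V → Bool,
      (f x * (aa β (B u) + bb β (B u) * spin (x pv)))
        * Real.exp (Aham es β B u pv x + dlt β (B u) * spin (x pv))
      = aa β (B u) * ∑ x : V → Bool,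
          f x * Real.exp (Aham es β B u pv x + dlt β (B u) * spin (x pv))
        + bb β (B u) * ∑ x : V → Bool,
            (f x * spin (x pv)) * Real.exp (Aham es β B u pv x + dlt β (B u) * spin (x pv)) := by
    rw [Finset.mul_sum, Finset.mul_sum, ← Finset.sum_add_distrib]
    exact Finset.sum_congr rfl fun x _ => by ring
  rw [hsplit]
  rw [mul_div_mul_left _ _ (ne_of_gt (div_pos (cc_pos β (B u)) two_pos)),
    mul_div_mul_left _ _ (Real.cosh_pos (B u)).ne',
    mul_div_mul_left _ _ (Real.cosh_pos (B u)).ne',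
    add_div, mul_div_assoc, mul_div_assoc]

lemma cov_step_indep (hup : u ≠ pv) (hmem : s(u, pv) ∈ es)
    (huniq : ∀ e ∈ es, u ∈ e → e = s(u, pv))
    (f g : (V → Bool) → ℝ) (hf : ∀ x b, f (Function.update x u b) = f x)
    (hg : ∀ x b, g (Function.update x u b) = g x) :
    EE es β B (fun x => f x * g x) - EE es β B f * EE es β B g
      = EE (es.erase s(u, pv)) β (Function.update B pv (B pv + dlt β (B u)))
            (fun x => f x * g x)
        - EE (es.erase s(u, pv)) β (Function.update B pv (B pv + dlt β (B u))) f
          * EE (es.erase s(u, pv)) β (Function.update B pv (B pv + dlt β (B u))) g := by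
  have hfg : ∀ (x : V → Bool) (b : Bool),
      (fun x => f x * g x) (Function.update x u b) = (fun x => f x * g x) x := by
    intro x b
    show f (Function.update x u b) * g (Function.update x u b) = f x * g x
    rw [hf x b, hg x b]
  rw [EE_marg es β B hup hmem huniq f hf, EE_marg es β B hup hmem huniq g hg,
    EE_marg es β B hup hmem huniq _ hfg]

lemma cov_step_leaf (hup : u ≠ pv) (hmem : s(u, pv) ∈ es)
    (huniq : ∀ e ∈ es, u ∈ e → e = s(u, pv))
    (f : (V → Bool) → ℝ) (hf : ∀ x b, f (Function.update x u b) = f x) :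
    EE es β B (fun x => f x * spin (x u))
        - EE es β B f * EE es β B (fun x => spin (x u))
      = bb β (B u) *
          (EE (es.erase s(u, pv)) β (Function.update B pv (B pv + dlt β (B u)))
              (fun x => f x * spin (x pv))
            - EE (es.erase s(u, pv)) β (Function.update B pv (B pv + dlt β (B u))) f
              * EE (es.erase s(u, pv)) β (Function.update B pv (B pv + dlt β (B u)))
                  (fun x => spin (x pv))) := by
  have h1 := EE_marg_spin es β B hup hmem huniq f hf
  have h2 := EE_marg_spin es β B hup hmem huniq (fun _ => 1) fun _ _ => rfl
  simp only [one_mul] at h2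
  rw [EE_one] at h2
  have h3 := EE_marg es β B hup hmem huniq f hf
  rw [h1, h2, h3]
  ring

end EElemmas

section GraphLemmas

lemma exists_max_path {G : SimpleGraph V} {a0 b0 : V} (h0 : G.Adj a0 b0) :
    ∃ (a b : V) (q : G.Walk a b), q.IsPath ∧ 1 ≤ q.length ∧
      ∀ (a' b' : V) (r : G.Walk a' b'), r.IsPath → r.length ≤ q.length := by
  have hne : Nonempty V := ⟨a0⟩
  set P : ℕ → Prop := fun n => ∃ (a b : V) (q : G.Walk a b), q.IsPath ∧ q.length = n
    with hPdef
  have hP1 : P 1 :=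
    ⟨a0, b0, (SimpleGraph.Path.singleton h0).1, (SimpleGraph.Path.singleton h0).2, rfl⟩
  have hN1 : 1 ≤ Fintype.card V := Fintype.card_pos
  obtain ⟨a, b, q, hq, hlen⟩ := Nat.findGreatest_spec hN1 hP1
  refine ⟨a, b, q, hq, ?_, ?_⟩
  · rw [hlen]; exact Nat.le_findGreatest hN1 hP1
  · intro a' b' r hr
    rw [hlen]
    exact Nat.le_findGreatest hr.length_lt.le ⟨a', b', r, hr, rfl⟩

lemma exists_leaf {G : SimpleGraph V} (hG : G.IsAcyclic) {a0 b0 : V} (h0 : G.Adj a0 b0) :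
    ∃ u p, G.Adj u p ∧ ∀ q, G.Adj u q → q = p := by
  obtain ⟨a, b, q, hq, hlen, hmax⟩ := exists_max_path h0
  cases q with
  | nil => simp at hlen
  | @cons _ d _ h r =>
    refine ⟨a, d, h, fun c hc => ?_⟩
    by_contra hne
    have hq' := (SimpleGraph.Walk.cons_isPath_iff h r).mp hq
    by_cases hcs : c ∈ r.support
    · have hdrop : (r.dropUntil c hcs).IsPath := hq'.1.dropUntil hcs
      have hno : a ∉ (r.dropUntil c hcs).support :=
        fun hmem => hq'.2 (SimpleGraph.Walk.support_dropUntil_subset r hcs hmem)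
      have hpath2 : (SimpleGraph.Walk.cons hc (r.dropUntil c hcs)).IsPath :=
        (SimpleGraph.Walk.cons_isPath_iff hc _).mpr ⟨hdrop, hno⟩
      have hEq : (⟨SimpleGraph.Walk.cons h r, hq⟩ : G.Path a b)
          = ⟨SimpleGraph.Walk.cons hc (r.dropUntil c hcs), hpath2⟩ := hG.path_unique _ _
      have hlens := congrArg (fun pp : G.Path a b => pp.1.length) hEq
      simp only [SimpleGraph.Walk.length_cons] at hlens
      have hspec := congrArg SimpleGraph.Walk.length (SimpleGraph.Walk.take_spec r hcs)
      rw [SimpleGraph.Walk.length_append] at hspec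
      have htpos : (r.takeUntil c hcs).length ≠ 0 := by
        intro h0'
        exact hne (SimpleGraph.Walk.eq_of_length_eq_zero h0').symm
      omega
    · have hca : c ≠ a := hc.ne'
      have hcs2 : c ∉ (SimpleGraph.Walk.cons h r).support := by
        rw [SimpleGraph.Walk.support_cons]
        intro hx
        rcases List.mem_cons.mp hx with h1 | h1
        · exact hca h1
        · exact hcs h1
      have hpath3 : (SimpleGraph.Walk.cons hc.symm (SimpleGraph.Walk.cons h r)).IsPath :=
        (SimpleGraph.Walk.cons_isPath_iff _ _).mpr ⟨hq, hcs2⟩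
      have hle := hmax _ _ _ hpath3
      simp only [SimpleGraph.Walk.length_cons] at hle
      omega

lemma leaf_not_mem_support {G : SimpleGraph V} {u p : V}
    (hleaf : ∀ q, G.Adj u q → q = p) {v w : V} (pth : G.Walk v w) (hp : pth.IsPath)
    (hv : u ≠ v) (hw : u ≠ w) : u ∉ pth.support := by
  intro hmem
  obtain ⟨b, hb, d2, hd2⟩ :=
    SimpleGraph.Walk.exists_eq_cons_of_ne hw (pth.dropUntil u hmem)
  obtain ⟨a, ha, t2, ht2⟩ :=
    SimpleGraph.Walk.exists_eq_cons_of_ne hv (pth.takeUntil u hmem).reverse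
  have hbp : b = p := hleaf b hb
  have hap : a = p := hleaf a ha
  have hat : a ∈ (pth.takeUntil u hmem).support := by
    have h1 : a ∈ (pth.takeUntil u hmem).reverse.support := by
      rw [ht2, SimpleGraph.Walk.support_cons]
      exact List.mem_cons_of_mem _ t2.start_mem_support
    rwa [SimpleGraph.Walk.support_reverse, List.mem_reverse] at h1
  have hbt : b ∈ (pth.dropUntil u hmem).support.tail := by
    rw [hd2, SimpleGraph.Walk.support_cons, List.tail_cons]
    exact d2.start_mem_support
  have hnodup := hp.support_nodup
  rw [← SimpleGraph.Walk.take_spec pth hmem, SimpleGraph.Walk.support_append] at hnodup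
  have hdisj := List.disjoint_of_nodup_append hnodup
  exact hdisj (hap ▸ hat) (hbp ▸ hbt)

lemma walk_transfer_erase {es : Finset (Sym2 V)} {u pvt v w : V}
    (pth : (SimpleGraph.fromEdgeSet (↑es : Set (Sym2 V))).Walk v w)
    (hu : u ∉ pth.support) :
    ∀ e ∈ pth.edges,
      e ∈ (SimpleGraph.fromEdgeSet (↑(es.erase s(u, pvt)) : Set (Sym2 V))).edgeSet := by
  intro e he
  have h1 := pth.edges_subset_edgeSet he
  rw [SimpleGraph.edgeSet_fromEdgeSet] at h1 ⊢
  refine ⟨?_, h1.2⟩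
  rw [Finset.coe_erase]
  refine ⟨h1.1, ?_⟩
  intro hEq
  rw [Set.mem_singleton_iff] at hEq
  subst hEq
  exact hu (pth.fst_mem_support_of_mem_edges he)

lemma isAcyclic_mono {G H : SimpleGraph V} (hle : G ≤ H) (hH : H.IsAcyclic) :
    G.IsAcyclic := by
  intro v c hc
  exact hH
    (c.transfer H fun e he => SimpleGraph.edgeSet_mono hle (c.edges_subset_edgeSet he))
    (hc.transfer _)

end GraphLemmas

lemma cov_case_eq (es : Finset (Sym2 V)) (β : ℝ) (B : V → ℝ) (v : V)
    {G : SimpleGraph V} (pth : G.Walk v v) (hpath : pth.IsPath) :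
    0 ≤ EE es β B (fun x => spin (x v) * spin (x v))
        - EE es β B (fun x => spin (x v)) * EE es β B (fun x => spin (x v)) ∧
      EE es β B (fun x => spin (x v) * spin (x v))
        - EE es β B (fun x => spin (x v)) * EE es β B (fun x => spin (x v))
      ≤ Real.tanh β ^ pth.length := by
  have hlen : pth.length = 0 := by
    rw [SimpleGraph.Walk.isPath_iff_eq_nil.mp hpath]
    rfl
  rw [hlen, pow_zero, EE_spin_sq]
  have h := abs_le.mp (abs_EE_spin_le_one es β B v)
  constructor <;> nlinarith [h.1, h.2]

lemma main_ind (n : ℕ) : ∀ (es : Finset (Sym2 V)) (β : ℝ) (B : V → ℝ),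
    es.card ≤ n → 0 ≤ β → (∀ i, 0 ≤ B i) → (∀ e ∈ es, ¬ e.IsDiag) →
    (SimpleGraph.fromEdgeSet (↑es : Set (Sym2 V))).IsAcyclic →
    ∀ (v w : V) (pth : (SimpleGraph.fromEdgeSet (↑es : Set (Sym2 V))).Walk v w),
      pth.IsPath →
    0 ≤ EE es β B (fun x => spin (x v) * spin (x w))
        - EE es β B (fun x => spin (x v)) * EE es β B (fun x => spin (x w)) ∧
      EE es β B (fun x => spin (x v) * spin (x w))
        - EE es β B (fun x => spin (x v)) * EE es β B (fun x => spin (x w))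
      ≤ Real.tanh β ^ pth.length := by
  induction n with
  | zero =>
    intro es β B hcard hβ hB hdiag hacy v w pth hpath
    rcases eq_or_ne v w with rfl | hvw
    · exact cov_case_eq es β B v pth hpath
    · exfalso
      obtain ⟨b0, hb0, r0, hr0⟩ := SimpleGraph.Walk.exists_eq_cons_of_ne hvw pth
      have hes : es = ∅ := Finset.card_eq_zero.mp (Nat.le_zero.mp hcard)
      have hmem := ((SimpleGraph.fromEdgeSet_adj _).mp hb0).1
      rw [hes] at hmem
      simp at hmem
  | succ n IH =>
    intro es β B hcard hβ hB hdiag hacy v w pth hpath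
    rcases eq_or_ne v w with rfl | hvw
    · exact cov_case_eq es β B v pth hpath
    obtain ⟨b0, hb0, r0, hr0⟩ := SimpleGraph.Walk.exists_eq_cons_of_ne hvw pth
    obtain ⟨u, pu, hadj, hleaf⟩ := exists_leaf hacy hb0
    have hupu : u ≠ pu := hadj.ne
    have hmem : s(u, pu) ∈ es :=
      Finset.mem_coe.mp ((SimpleGraph.fromEdgeSet_adj _).mp hadj).1
    have huniq : ∀ e ∈ es, u ∈ e → e = s(u, pu) := by
      intro e he hue
      obtain ⟨q, rfl⟩ := Sym2.mem_iff_exists.mp hue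
      have hq : u ≠ q := by
        intro h
        exact hdiag _ he (Sym2.mk_isDiag_iff.mpr h)
      have hadj2 : (SimpleGraph.fromEdgeSet (↑es : Set (Sym2 V))).Adj u q :=
        (SimpleGraph.fromEdgeSet_adj _).mpr ⟨Finset.mem_coe.mpr he, hq⟩
      rw [hleaf q hadj2]
    have hcard' : (es.erase s(u, pu)).card ≤ n := by
      have := Finset.card_erase_of_mem hmem
      omega
    have hB'0 : ∀ i, 0 ≤ Function.update B pu (B pu + dlt β (B u)) i := by
      intro i
      rcases eq_or_ne i pu with rfl | h
      · rw [Function.update_self]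
        exact add_nonneg (hB i) (dlt_nonneg hβ (hB u))
      · rw [Function.update_of_ne h]
        exact hB i
    have hdiag' : ∀ e ∈ es.erase s(u, pu), ¬ e.IsDiag :=
      fun e he => hdiag e (Finset.mem_of_mem_erase he)
    have hle : SimpleGraph.fromEdgeSet (↑(es.erase s(u, pu)) : Set (Sym2 V))
        ≤ SimpleGraph.fromEdgeSet (↑es : Set (Sym2 V)) := by
      apply SimpleGraph.fromEdgeSet_mono
      rw [Finset.coe_erase]
      exact Set.diff_subset
    have hacy' := isAcyclic_mono hle hacy
    have hbb0 : 0 ≤ bb β (B u) := bb_nonneg hβ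
    have hbb1 : bb β (B u) ≤ Real.tanh β := bb_le_tanh hβ
    rcases eq_or_ne u v with rfl | huv
    · -- leaf at v
      have hb0pu : b0 = pu := hleaf b0 hb0
      subst hb0pu
      have hrpath : r0.IsPath ∧ u ∉ r0.support := by
        rw [hr0] at hpath
        exact (SimpleGraph.Walk.cons_isPath_iff hb0 r0).mp hpath
      have htrans := walk_transfer_erase (pvt := b0) r0 hrpath.2
      have ihres := IH (es.erase s(u, b0)) β (Function.update B b0 (B b0 + dlt β (B u)))
        hcard' hβ hB'0 hdiag' hacy' b0 w (r0.transfer _ htrans)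
        (hrpath.1.transfer htrans)
      rw [SimpleGraph.Walk.length_transfer] at ihres
      obtain ⟨ih1, ih2⟩ := ihres
      have hstep := cov_step_leaf es β B hupu hmem huniq (fun x => spin (x w))
        (fun x b => by
          show spin (Function.update x u b w) = spin (x w)
          rw [Function.update_of_ne (Ne.symm hvw)])
      have hEEcomm : EE (es.erase s(u, b0)) β (Function.update B b0 (B b0 + dlt β (B u)))
          (fun x => spin (x w) * spin (x b0))
          = EE (es.erase s(u, b0)) β (Function.update B b0 (B b0 + dlt β (B u)))
            (fun x => spin (x b0) * spin (x w)) := by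
        rw [show (fun x : V → Bool => spin (x w) * spin (x b0))
            = fun x => spin (x b0) * spin (x w) from funext fun x => mul_comm _ _]
      rw [hEEcomm] at hstep
      have hgoal : EE es β B (fun x => spin (x u) * spin (x w))
          - EE es β B (fun x => spin (x u)) * EE es β B (fun x => spin (x w))
          = bb β (B u) *
            (EE (es.erase s(u, b0)) β (Function.update B b0 (B b0 + dlt β (B u)))
              (fun x => spin (x b0) * spin (x w))
            - EE (es.erase s(u, b0)) β (Function.update B b0 (B b0 + dlt β (B u)))
                (fun x => spin (x b0))
              * EE (es.erase s(u, b0)) β (Function.update B b0 (B b0 + dlt β (B u)))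
                  (fun x => spin (x w))) := by
        rw [show (fun x : V → Bool => spin (x u) * spin (x w))
            = fun x => spin (x w) * spin (x u) from funext fun x => mul_comm _ _]
        linear_combination hstep
      rw [hgoal, hr0, SimpleGraph.Walk.length_cons]
      constructor
      · exact mul_nonneg hbb0 ih1
      · rw [pow_succ']
        exact mul_le_mul hbb1 ih2 ih1 (tanh_nonneg hβ)
    rcases eq_or_ne u w with rfl | huw
    · -- leaf at w
      obtain ⟨b1, hb1, r1, hr1⟩ :=
        SimpleGraph.Walk.exists_eq_cons_of_ne (Ne.symm hvw) pth.reverse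
      have hb1pu : b1 = pu := hleaf b1 hb1
      subst hb1pu
      have hrevpath := hpath.reverse
      rw [hr1] at hrevpath
      have hr1path := (SimpleGraph.Walk.cons_isPath_iff hb1 r1).mp hrevpath
      have hwnot : u ∉ r1.reverse.support := by
        rw [SimpleGraph.Walk.support_reverse, List.mem_reverse]
        exact hr1path.2
      have htrans := walk_transfer_erase (pvt := b1) r1.reverse hwnot
      have ihres := IH (es.erase s(u, b1)) β (Function.update B b1 (B b1 + dlt β (B u)))
        hcard' hβ hB'0 hdiag' hacy' v b1 (r1.reverse.transfer _ htrans)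
        ((hr1path.1.reverse).transfer htrans)
      rw [SimpleGraph.Walk.length_transfer, SimpleGraph.Walk.length_reverse] at ihres
      obtain ⟨ih1, ih2⟩ := ihres
      have hlen : pth.length = r1.length + 1 := by
        have h := congrArg SimpleGraph.Walk.length hr1
        rwa [SimpleGraph.Walk.length_reverse, SimpleGraph.Walk.length_cons] at h
      have hstep := cov_step_leaf es β B hupu hmem huniq (fun x => spin (x v))
        (fun x b => by
          show spin (Function.update x u b v) = spin (x v)
          rw [Function.update_of_ne (Ne.symm huv)])
      rw [hstep, hlen]
      constructor
      · exact mul_nonneg hbb0 ih1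
      · rw [pow_succ']
        exact mul_le_mul hbb1 ih2 ih1 (tanh_nonneg hβ)
    · -- leaf not an endpoint
      have hnot := leaf_not_mem_support hleaf pth hpath huv huw
      have htrans := walk_transfer_erase (pvt := pu) pth hnot
      have ihres := IH (es.erase s(u, pu)) β (Function.update B pu (B pu + dlt β (B u)))
        hcard' hβ hB'0 hdiag' hacy' v w (pth.transfer _ htrans)
        (hpath.transfer htrans)
      rw [SimpleGraph.Walk.length_transfer] at ihres
      have hstep := cov_step_indep es β B hupu hmem huniq
        (fun x => spin (x v)) (fun x => spin (x w))
        (fun x b => by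
          show spin (Function.update x u b v) = spin (x v)
          rw [Function.update_of_ne (Ne.symm huv)])
        (fun x b => by
          show spin (Function.update x u b w) = spin (x w)
          rw [Function.update_of_ne (Ne.symm huw)])
      rw [hstep]
      exact ihres

/-- Ising Hamiltonian `β Σ_{(i,j)∈E} x_i x_j + Σ_i B_i x_i`. -/
noncomputable def ham (G : SimpleGraph V) (β : ℝ) (B : V → ℝ) (x : V → Bool) : ℝ :=
  β * ∑ e ∈ G.edgeFinset, edgeTerm x e + ∑ v, B v * spin (x v)

/-- expectation `⟨f⟩` under the Ising measure `ν^{β,B}_G` on `{-1,+1}^V`. -/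
noncomputable def isingExp (G : SimpleGraph V) (β : ℝ) (B : V → ℝ)
    (f : (V → Bool) → ℝ) : ℝ :=
  (∑ x : V → Bool, f x * Real.exp (ham G β B x)) /
    (∑ x : V → Bool, Real.exp (ham G β B x))

/-- **Uniform correlation decay on trees.**  For a finite tree `T`, `β ≥ 0` and
nonnegative external fields `B`, the covariance of any two spins satisfies
`0 ≤ ⟨x_v x_w⟩ - ⟨x_v⟩⟨x_w⟩ ≤ (tanh β)^{d(v,w)}`. -/
theorem ising_correlation_decay (T : SimpleGraph V) (hT : T.IsTree)
    (β : ℝ) (hβ : 0 ≤ β) (B : V → ℝ) (hB : ∀ v, 0 ≤ B v) (v w : V) :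
    0 ≤ isingExp T β B (fun x => spin (x v) * spin (x w)) -
          isingExp T β B (fun x => spin (x v)) * isingExp T β B (fun x => spin (x w)) ∧
      isingExp T β B (fun x => spin (x v) * spin (x w)) -
          isingExp T β B (fun x => spin (x v)) * isingExp T β B (fun x => spin (x w)) ≤
        (Real.tanh β) ^ (T.dist v w) := by
  obtain ⟨pth, hpath, hlen⟩ := hT.isConnected.exists_path_of_dist v w
  have hGeq : SimpleGraph.fromEdgeSet (↑T.edgeFinset : Set (Sym2 V)) = T := by
    rw [SimpleGraph.coe_edgeFinset, SimpleGraph.fromEdgeSet_edgeSet]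
  have htrans : ∀ e ∈ pth.edges,
      e ∈ (SimpleGraph.fromEdgeSet (↑T.edgeFinset : Set (Sym2 V))).edgeSet := by
    intro e he
    rw [hGeq]
    exact pth.edges_subset_edgeSet he
  have hacy : (SimpleGraph.fromEdgeSet (↑T.edgeFinset : Set (Sym2 V))).IsAcyclic := by
    rw [hGeq]; exact hT.IsAcyclic
  have hdiag : ∀ e ∈ T.edgeFinset, ¬ e.IsDiag := fun e he =>
    T.not_isDiag_of_mem_edgeSet (SimpleGraph.mem_edgeFinset.mp he)
  have hres := main_ind T.edgeFinset.card T.edgeFinset β B le_rfl hβ hB hdiag hacy v w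
    (pth.transfer _ htrans) (hpath.transfer htrans)
  rw [SimpleGraph.Walk.length_transfer, hlen] at hres
  exact hres
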